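/- (Vanishing of the upcrossing probability p_{ε,z}.) For every z > 0 one has lim_{ε→0⁺} (∫_ε^{2ε} g_ε(y) dy) / (∫_ε^{z} g_ε(y) dy) = 0. -/

import Mathlib

open MeasureTheory Real Set Filter intervalIntegral
open scoped Topology

private lemma aux_linear_lower (σ : ℝ → ℝ) (hσ : ContDiffOn ℝ 2 σ (Ici 0))
    (hσ0 : σ 0 = 0) (hpos : ∀ x : ℝ, 0 < x → 0 < σ x)
    (hσ' : 0 < derivWithin σ (Ici 0) 0) (z : ℝ) (hz : 0 < z) :
    ∃ c > 0, ∀ l ∈ Ioc (0:ℝ) z, c * l ≤ σ l := by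
  set s := derivWithin σ (Ici 0) 0 with hsdef
  have hcont : ContinuousOn (derivWithin σ (Ici 0)) (Ici 0) :=
    hσ.continuousOn_derivWithin (uniqueDiffOn_Ici 0) one_le_two
  have h0 : Tendsto (derivWithin σ (Ici 0)) (𝓝[Ici 0] 0) (𝓝 s) := hcont 0 Set.self_mem_Ici
  have hev : ∀ᶠ x in 𝓝[Ici (0:ℝ)] 0, s / 2 < derivWithin σ (Ici 0) x :=
    h0.eventually (eventually_gt_nhds (half_lt_self hσ'))
  obtain ⟨δ, hδ, hball⟩ := Metric.mem_nhdsWithin_iff.1 hev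
  set δ₀ := δ / 2 with hδ₀def
  have hδ₀ : 0 < δ₀ := by positivity
  have hder : ∀ x ∈ Icc (0:ℝ) δ₀, s / 2 < derivWithin σ (Ici 0) x := by
    intro x hx
    refine hball ⟨?_, hx.1⟩
    simp only [Metric.mem_ball, Real.dist_eq, sub_zero]
    rw [abs_of_nonneg hx.1]
    linarith [hx.2]
  -- monotonicity of σ x - s/2 x on Icc 0 δ₀
  have hmono : MonotoneOn (fun x => σ x - s / 2 * x) (Icc 0 δ₀) := by
    apply monotoneOn_of_deriv_nonneg (convex_Icc _ _)
    · exact ((hσ.continuousOn.mono (Icc_subset_Ici_self)).sub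
        (continuous_const.mul continuous_id).continuousOn)
    · intro x hx
      rw [interior_Icc] at hx
      have hdx : DifferentiableAt ℝ σ x :=
        ((hσ.differentiableOn two_ne_zero) x (le_of_lt hx.1)).differentiableAt
          (Ici_mem_nhds hx.1)
      exact (hdx.sub ((differentiable_const _).mul differentiable_id).differentiableAt).differentiableWithinAt
    · intro x hx
      rw [interior_Icc] at hx
      have hdx : DifferentiableAt ℝ σ x :=
        ((hσ.differentiableOn two_ne_zero) x (le_of_lt hx.1)).differentiableAt
          (Ici_mem_nhds hx.1)
      have heq : derivWithin σ (Ici 0) x = deriv σ x :=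
        derivWithin_of_mem_nhds (Ici_mem_nhds hx.1)
      have h1 : s / 2 < deriv σ x := heq ▸ hder x ⟨hx.1.le, hx.2.le⟩
      have hd : HasDerivAt (fun x => σ x - s / 2 * x) (deriv σ x - s / 2 * 1) x :=
        hdx.hasDerivAt.sub ((hasDerivAt_id x).const_mul (s / 2))
      rw [hd.deriv]
      linarith
  have hlin : ∀ x ∈ Icc (0:ℝ) δ₀, s / 2 * x ≤ σ x := by
    intro x hx
    have := hmono ⟨le_rfl, hδ₀.le⟩ hx hx.1
    simp only [hσ0] at this
    linarith [this]
  -- min of σ l / l on [min δ₀ z, z]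
  set t := min δ₀ z with htdef
  have ht : 0 < t := lt_min hδ₀ hz
  have htz : t ≤ z := min_le_right _ _
  have hK : IsCompact (Icc t z) := isCompact_Icc
  have hne : (Icc t z).Nonempty := nonempty_Icc.2 htz
  have hgc : ContinuousOn (fun l => σ l / l) (Icc t z) := by
    refine (hσ.continuousOn.mono ?_).div continuousOn_id ?_
    · intro l hl; exact le_trans ht.le hl.1
    · intro l hl; exact ne_of_gt (lt_of_lt_of_le ht hl.1)
  obtain ⟨x₀, hx₀, hmin⟩ := hK.exists_isMinOn hne hgc
  have hc₂ : 0 < σ x₀ / x₀ := div_pos (hpos x₀ (lt_of_lt_of_le ht hx₀.1)) (lt_of_lt_of_le ht hx₀.1)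
  refine ⟨min (s / 2) (σ x₀ / x₀), lt_min (half_pos hσ') hc₂, ?_⟩
  intro l hl
  rcases le_or_gt l t with h | h
  · have h1 : l ∈ Icc (0:ℝ) δ₀ := ⟨hl.1.le, le_trans h (min_le_left _ _)⟩
    calc min (s / 2) (σ x₀ / x₀) * l ≤ s / 2 * l :=
          mul_le_mul_of_nonneg_right (min_le_left _ _) hl.1.le
      _ ≤ σ l := hlin l h1
  · have h1 : l ∈ Icc t z := ⟨h.le, hl.2⟩
    have h2 : σ x₀ / x₀ ≤ σ l / l := hmin h1
    calc min (s / 2) (σ x₀ / x₀) * l ≤ σ x₀ / x₀ * l :=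
          mul_le_mul_of_nonneg_right (min_le_right _ _) hl.1.le
      _ ≤ σ l / l * l := mul_le_mul_of_nonneg_right h2 hl.1.le
      _ = σ l := div_mul_cancel₀ _ (ne_of_gt hl.1)

private lemma aux_cont_primitive (f : ℝ → ℝ) (t z : ℝ) (ht : t ≤ z)
    (hf : ContinuousOn f (Icc t z)) :
    ContinuousOn (fun y => ∫ l in y..z, f l) (Icc t z) := by
  have h1 : IntegrableOn f (uIcc t z) := by
    rw [uIcc_of_le ht]; exact hf.integrableOn_Icc
  have := intervalIntegral.continuousOn_primitive_interval_left (f := f) (μ := volume) h1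
  rwa [uIcc_of_le ht] at this

/-- (Vanishing of the upcrossing probability `p_{ε,z}`.) For every `z > 0` one has
`lim_{ε→0⁺} (∫_ε^{2ε} g_ε(y) dy) / (∫_ε^{z} g_ε(y) dy) = 0`, where
`g_ε(y) = exp(∫_y^z (ε·b₁(l) − b₂(l))/σ(l)² dl)`. -/
theorem statement1
    (b1 b2 σ : ℝ → ℝ)
    (hb1 : ContDiffOn ℝ 1 b1 (Ici 0))
    (hb1inf : ∃ m > 0, ∀ x ∈ Ici (0 : ℝ), m ≤ b1 x)
    (hb1sup : ∃ M : ℝ, ∀ x ∈ Ici (0 : ℝ), b1 x ≤ M)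
    (hb2 : ContDiffOn ℝ 2 b2 (Ici 0))
    (hb2nonneg : ∀ x ∈ Ici (0 : ℝ), 0 ≤ b2 x)
    (hb20 : b2 0 = 0)
    (hb2' : 0 < derivWithin b2 (Ici 0) 0)
    (hσ : ContDiffOn ℝ 2 σ (Ici 0))
    (hσnonneg : ∀ x ∈ Ici (0 : ℝ), 0 ≤ σ x)
    (hσzero : ∀ x ∈ Ici (0 : ℝ), (σ x = 0 ↔ x = 0))
    (hσ' : 0 < derivWithin σ (Ici 0) 0)
    (z : ℝ) (hz : 0 < z) :
    Tendsto
      (fun ε : ℝ =>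
        (∫ y in ε..(2 * ε), Real.exp (∫ l in y..z, (ε * b1 l - b2 l) / σ l ^ 2)) /
          (∫ y in ε..z, Real.exp (∫ l in y..z, (ε * b1 l - b2 l) / σ l ^ 2)))
      (𝓝[>] (0 : ℝ)) (𝓝 0) := by
  obtain ⟨m, hm, hmb⟩ := hb1inf
  obtain ⟨M, hMb⟩ := hb1sup
  have hM : 0 < M := lt_of_lt_of_le hm (le_trans (hmb 0 Set.self_mem_Ici) (hMb 0 Set.self_mem_Ici))
  have hσ0 : σ 0 = 0 := (hσzero 0 Set.self_mem_Ici).2 rfl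
  have hσpos : ∀ x : ℝ, 0 < x → 0 < σ x := by
    intro x hx
    rcases lt_or_eq_of_le (hσnonneg x hx.le) with h | h
    · exact h
    · exact absurd ((hσzero x hx.le).1 h.symm) (ne_of_gt hx)
  obtain ⟨c, hc, hcl⟩ := aux_linear_lower σ hσ hσ0 hσpos hσ' z hz
  have hb1c := hb1.continuousOn
  have hb2c := hb2.continuousOn
  have hσc := hσ.continuousOn
  have hFc : ∀ (ε t : ℝ), 0 < t →
      ContinuousOn (fun l => (ε * b1 l - b2 l) / σ l ^ 2) (Icc t z) := by
    intro ε t ht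
    have hsub : Icc t z ⊆ Ici 0 := fun l hl => le_trans ht.le hl.1
    exact ((continuousOn_const.mul (hb1c.mono hsub)).sub (hb2c.mono hsub)).div
      ((hσc.mono hsub).pow 2)
      (fun l hl => pow_ne_zero 2 (ne_of_gt (hσpos l (lt_of_lt_of_le ht hl.1))))
  have hz2 : (0:ℝ) < z / 2 := half_pos hz
  have hsub2 : Icc (z/2) z ⊆ Ici (0:ℝ) := fun l hl => le_trans hz2.le hl.1
  obtain ⟨x₁, hx₁, hminσ⟩ := isCompact_Icc.exists_isMinOn (nonempty_Icc.2 (by linarith : z/2 ≤ z))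
    (hσc.mono hsub2)
  obtain ⟨x₂, hx₂, hmaxb⟩ := isCompact_Icc.exists_isMaxOn (nonempty_Icc.2 (by linarith : z/2 ≤ z))
    (hb2c.mono hsub2)
  have hm₁ : 0 < σ x₁ := hσpos x₁ (lt_of_lt_of_le hz2 hx₁.1)
  have hB : 0 ≤ b2 x₂ := hb2nonneg x₂ (hsub2 hx₂)
  set K : ℝ := b2 x₂ / σ x₁ ^ 2 * (z / 2) with hKdef
  have hK0 : 0 ≤ K := by positivity
  set Cn : ℝ := M / c ^ 2 with hCndef
  set c₀ : ℝ := z / 2 * Real.exp (-K) with hc₀def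
  have hc₀ : 0 < c₀ := by positivity
  -- pointwise exponent upper bound for the numerator
  have hexp_num : ∀ ε ∈ Ioo (0:ℝ) (z/2), ∀ y ∈ Icc ε (2*ε),
      (∫ l in y..z, (ε * b1 l - b2 l) / σ l ^ 2) ≤ Cn := by
    intro ε hε y hy
    have hε0 : 0 < ε := hε.1
    have hy0 : 0 < y := lt_of_lt_of_le hε0 hy.1
    have hyz : y ≤ z := le_trans hy.2 (by linarith [hε.2])
    have hptw : ∀ l ∈ Icc y z, (ε * b1 l - b2 l) / σ l ^ 2 ≤ ε * M / c ^ 2 * l ^ (-2 : ℤ) := by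
      intro l hl
      have hl0 : 0 < l := lt_of_lt_of_le hy0 hl.1
      have hσl : 0 < σ l := hσpos l hl0
      have hσl2 : 0 < σ l ^ 2 := by positivity
      have hcl2 : c * l ≤ σ l := hcl l ⟨hl0, hl.2⟩
      have hσge : c ^ 2 * l ^ 2 ≤ σ l ^ 2 := by
        have := pow_le_pow_left₀ (by positivity : (0:ℝ) ≤ c * l) hcl2 2
        calc c ^ 2 * l ^ 2 = (c * l) ^ 2 := by ring
          _ ≤ σ l ^ 2 := this
      have h1 : (ε * b1 l - b2 l) / σ l ^ 2 ≤ ε * b1 l / σ l ^ 2 :=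
        (div_le_div_iff_of_pos_right hσl2).2 (sub_le_self _ (hb2nonneg l hl0.le))
      have h2 : ε * b1 l / σ l ^ 2 ≤ ε * M / (c ^ 2 * l ^ 2) := by
        apply div_le_div₀ (by positivity)
          (mul_le_mul_of_nonneg_left (hMb l hl0.le) hε0.le) (by positivity) hσge
      have h3 : ε * M / (c ^ 2 * l ^ 2) = ε * M / c ^ 2 * l ^ (-2 : ℤ) := by
        have hz2' : (l : ℝ) ^ (-2 : ℤ) = (l ^ 2)⁻¹ := by
          rw [zpow_neg]; norm_cast
        rw [hz2']
        ring
      linarith [h1, h2, h3.le]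
    have hint1 : IntervalIntegrable (fun l => (ε * b1 l - b2 l) / σ l ^ 2) volume y z := by
      apply ContinuousOn.intervalIntegrable
      rw [uIcc_of_le hyz]
      exact hFc ε y hy0
    have hint2 : IntervalIntegrable (fun l : ℝ => ε * M / c ^ 2 * l ^ (-2 : ℤ)) volume y z := by
      apply ContinuousOn.intervalIntegrable
      rw [uIcc_of_le hyz]
      exact continuousOn_const.mul (continuousOn_id.zpow₀ _
        (fun l hl => Or.inl (ne_of_gt (lt_of_lt_of_le hy0 hl.1))))
    have hstep1 := intervalIntegral.integral_mono_on hyz hint1 hint2 hptw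
    have hstep2 : (∫ l in y..z, ε * M / c ^ 2 * l ^ (-2 : ℤ)) = ε * M / c ^ 2 * (y⁻¹ - z⁻¹) := by
      rw [intervalIntegral.integral_const_mul]
      rw [integral_zpow (Or.inr ⟨by norm_num,
        by rw [uIcc_of_le hyz]; exact fun h => absurd h.1 (not_le.2 hy0)⟩)]
      norm_num
      exact Or.inl (by ring)
    have hstep3 : ε * M / c ^ 2 * (y⁻¹ - z⁻¹) ≤ Cn := by
      have hyinv : y⁻¹ ≤ ε⁻¹ := one_div_le_one_div_of_le hε0 hy.1 |>.trans_eq (one_div _) |>.trans_eq' (one_div _)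
      have hzinv : 0 ≤ z⁻¹ := by positivity
      have : ε * M / c ^ 2 * (y⁻¹ - z⁻¹) ≤ ε * M / c ^ 2 * ε⁻¹ :=
        mul_le_mul_of_nonneg_left (by linarith) (by positivity)
      have heq : ε * M / c ^ 2 * ε⁻¹ = Cn := by
        field_simp [hCndef]
        rw [hCndef]; field_simp
      linarith [this, heq.le]
    linarith [hstep1, hstep2.le, hstep3]
  -- pointwise exponent lower bound for the denominator
  have hexp_den : ∀ ε ∈ Ioo (0:ℝ) (z/2), ∀ y ∈ Icc (z/2) z,
      -K ≤ ∫ l in y..z, (ε * b1 l - b2 l) / σ l ^ 2 := by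
    intro ε hε y hy
    have hy0 : 0 < y := lt_of_lt_of_le hz2 hy.1
    have hptw : ∀ l ∈ Icc y z, -(b2 x₂ / σ x₁ ^ 2) ≤ (ε * b1 l - b2 l) / σ l ^ 2 := by
      intro l hl
      have hl2 : l ∈ Icc (z/2) z := ⟨le_trans hy.1 hl.1, hl.2⟩
      have hl0 : 0 < l := lt_of_lt_of_le hz2 hl2.1
      have hσl2 : 0 < σ l ^ 2 := pow_pos (hσpos l hl0) 2
      have hb1l : 0 ≤ ε * b1 l := mul_nonneg hε.1.le (le_trans hm.le (hmb l hl0.le))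
      have h1 : -(b2 l) / σ l ^ 2 ≤ (ε * b1 l - b2 l) / σ l ^ 2 :=
        (div_le_div_iff_of_pos_right hσl2).2 (by linarith)
      have h2 : b2 l / σ l ^ 2 ≤ b2 x₂ / σ x₁ ^ 2 := by
        apply div_le_div₀ (le_trans (hb2nonneg l hl0.le) (hmaxb hl2))
          (hmaxb hl2) (pow_pos hm₁ 2)
          (pow_le_pow_left₀ (hσnonneg x₁ (hsub2 hx₁)) (hminσ hl2) 2)
      have h3 : -(b2 x₂ / σ x₁ ^ 2) ≤ -(b2 l) / σ l ^ 2 := by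
        rw [neg_div]
        linarith
      linarith
    have hint1 : IntervalIntegrable (fun l => (ε * b1 l - b2 l) / σ l ^ 2) volume y z := by
      apply ContinuousOn.intervalIntegrable
      rw [uIcc_of_le hy.2]
      exact hFc ε y hy0
    have hstep := intervalIntegral.integral_mono_on hy.2 intervalIntegrable_const hint1 hptw
    rw [intervalIntegral.integral_const, smul_eq_mul] at hstep
    have : -K ≤ (z - y) * -(b2 x₂ / σ x₁ ^ 2) := by
      rw [hKdef]
      have h4 : z - y ≤ z / 2 := by linarith [hy.1]
      have h5 : 0 ≤ z - y := by linarith [hy.2]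
      nlinarith [div_nonneg hB (le_of_lt (pow_pos hm₁ 2))]
    linarith
  -- continuity of the integrand in y
  have hgcont : ∀ ε ∈ Ioo (0:ℝ) (z/2),
      ContinuousOn (fun y => Real.exp (∫ l in y..z, (ε * b1 l - b2 l) / σ l ^ 2)) (Icc ε z) :=
    fun ε hε => Real.continuous_exp.comp_continuousOn
      (aux_cont_primitive _ ε z (by linarith [hε.2]) (hFc ε ε hε.1))
  -- denominator lower bound
  have hden : ∀ ε ∈ Ioo (0:ℝ) (z/2),
      c₀ ≤ ∫ y in ε..z, Real.exp (∫ l in y..z, (ε * b1 l - b2 l) / σ l ^ 2) := by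
    intro ε hε
    have hεz : ε ≤ z := by linarith [hε.2]
    have i1 : IntervalIntegrable
        (fun y => Real.exp (∫ l in y..z, (ε * b1 l - b2 l) / σ l ^ 2)) volume ε (z/2) := by
      apply ContinuousOn.intervalIntegrable
      rw [uIcc_of_le hε.2.le]
      exact (hgcont ε hε).mono (Icc_subset_Icc le_rfl (by linarith))
    have i2 : IntervalIntegrable
        (fun y => Real.exp (∫ l in y..z, (ε * b1 l - b2 l) / σ l ^ 2)) volume (z/2) z := by
      apply ContinuousOn.intervalIntegrable
      rw [uIcc_of_le (by linarith : z/2 ≤ z)]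
      exact (hgcont ε hε).mono (Icc_subset_Icc hε.2.le le_rfl)
    rw [← intervalIntegral.integral_add_adjacent_intervals i1 i2]
    have h1 : 0 ≤ ∫ y in ε..(z/2), Real.exp (∫ l in y..z, (ε * b1 l - b2 l) / σ l ^ 2) :=
      intervalIntegral.integral_nonneg hε.2.le (fun u _ => (Real.exp_pos _).le)
    have h2 : c₀ ≤ ∫ y in (z/2)..z, Real.exp (∫ l in y..z, (ε * b1 l - b2 l) / σ l ^ 2) := by
      have hconst : (∫ _ in (z/2)..z, Real.exp (-K)) = c₀ := by
        rw [intervalIntegral.integral_const, smul_eq_mul, hc₀def]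
        ring
      rw [← hconst]
      exact intervalIntegral.integral_mono_on (by linarith) intervalIntegrable_const i2
        (fun y hy => Real.exp_le_exp.2 (hexp_den ε hε y hy))
    linarith
  -- numerator upper bound
  have hnum : ∀ ε ∈ Ioo (0:ℝ) (z/2),
      (∫ y in ε..(2*ε), Real.exp (∫ l in y..z, (ε * b1 l - b2 l) / σ l ^ 2))
        ≤ Real.exp Cn * ε := by
    intro ε hε
    have h := intervalIntegral.norm_integral_le_of_norm_le_const
      (C := Real.exp Cn) (a := ε) (b := 2*ε)
      (f := fun y => Real.exp (∫ l in y..z, (ε * b1 l - b2 l) / σ l ^ 2)) ?_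
    · rw [show |2*ε - ε| = ε by rw [abs_of_nonneg (by linarith [hε.1])]; ring] at h
      exact le_trans (le_abs_self _) h
    · intro y hy
      rw [Set.uIoc_of_le (by linarith [hε.1] : ε ≤ 2*ε)] at hy
      rw [Real.norm_eq_abs, abs_of_pos (Real.exp_pos _)]
      exact Real.exp_le_exp.2 (hexp_num ε hε y ⟨hy.1.le, hy.2⟩)
  -- squeeze
  apply squeeze_zero' (g := fun ε => Real.exp Cn * ε / c₀)
  · filter_upwards [Ioo_mem_nhdsGT_of_mem (⟨le_rfl, hz2⟩ : (0:ℝ) ∈ Ico 0 (z/2))] with ε hε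
    apply div_nonneg
    · exact intervalIntegral.integral_nonneg (by linarith [hε.1]) (fun u _ => (Real.exp_pos _).le)
    · exact le_trans hc₀.le (hden ε hε)
  · filter_upwards [Ioo_mem_nhdsGT_of_mem (⟨le_rfl, hz2⟩ : (0:ℝ) ∈ Ico 0 (z/2))] with ε hε
    have h1 := hnum ε hε
    have h2 := hden ε hε
    have h0 : 0 ≤ ∫ y in ε..(2*ε), Real.exp (∫ l in y..z, (ε * b1 l - b2 l) / σ l ^ 2) :=
      intervalIntegral.integral_nonneg (by linarith [hε.1]) (fun u _ => (Real.exp_pos _).le)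
    calc (∫ y in ε..(2*ε), Real.exp (∫ l in y..z, (ε * b1 l - b2 l) / σ l ^ 2)) /
          (∫ y in ε..z, Real.exp (∫ l in y..z, (ε * b1 l - b2 l) / σ l ^ 2))
        ≤ (Real.exp Cn * ε) / c₀ :=
          div_le_div₀ (mul_nonneg (Real.exp_pos _).le hε.1.le) h1 hc₀ h2
      _ = Real.exp Cn * ε / c₀ := rfl
  · have hcont : Continuous fun ε : ℝ => Real.exp Cn * ε / c₀ :=
      (continuous_const.mul continuous_id).div_const c₀
    have := (hcont.tendsto 0).mono_left (nhdsWithin_le_nhds (s := Ioi (0:ℝ)))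
    simpa using this
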